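/- Let z : [t₀,∞) → (0, 1/M₁) be C¹ with t₀ > 0, satisfying z′/(z(1 − M₁z)) + 1/(2t) ≤ 0 pointwise. Then for all t ≥ t₀: t^{1/2}·z(t)·(1 − M₁·z(t₀)) ≤ t₀^{1/2}·z(t₀)·(1 − M₁·z(t)), and hence t·z(t)² ≤ t₀·z(t₀)²/(1 − M₁·z(t₀))². -/

import Mathlib

/-- Integrated form of the corrected-energy inequality: if `z : [t₀,∞) → (0, 1/M₁)`
is `C¹` with `z′/(z(1 − M₁z)) + 1/(2t) ≤ 0`, then
`t^{1/2}·z(t)·(1 − M₁·z(t₀)) ≤ t₀^{1/2}·z(t₀)·(1 − M₁·z(t))`, hence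
`t·z(t)² ≤ t₀·z(t₀)²/(1 − M₁·z(t₀))²`. -/
theorem stmt_8 (t₀ M₁ : ℝ) (ht₀ : 0 < t₀) (hM₁ : 0 < M₁)
    (z z' : ℝ → ℝ)
    (hz : ∀ t, t₀ ≤ t → 0 < z t ∧ z t < 1 / M₁)
    (hderiv : ∀ t, t₀ ≤ t → HasDerivAt z (z' t) t)
    (hcont : ContinuousOn z' (Set.Ici t₀))
    (hineq : ∀ t, t₀ ≤ t → z' t / (z t * (1 - M₁ * z t)) + 1 / (2 * t) ≤ 0) :
    ∀ t, t₀ ≤ t →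
      Real.sqrt t * z t * (1 - M₁ * z t₀) ≤ Real.sqrt t₀ * z t₀ * (1 - M₁ * z t) ∧
      t * (z t) ^ 2 ≤ t₀ * (z t₀) ^ 2 / (1 - M₁ * z t₀) ^ 2 := by
  have key : ∀ s, t₀ ≤ s → 0 < z s ∧ 0 < 1 - M₁ * z s := by
    intro s hs
    obtain ⟨h1, h2⟩ := hz s hs
    have h3 : M₁ * z s < 1 := by
      have := (lt_div_iff₀ hM₁).mp h2
      nlinarith
    exact ⟨h1, by linarith⟩
  set F : ℝ → ℝ := fun s => Real.log (z s) - Real.log (1 - M₁ * z s) + Real.log s / 2 with hF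
  have hFderiv : ∀ s ∈ Set.Ici t₀,
      HasDerivAt F (z' s / (z s * (1 - M₁ * z s)) + 1 / (2 * s)) s := by
    intro s hs
    have hs0 : 0 < s := lt_of_lt_of_le ht₀ hs
    obtain ⟨hz1, hz2⟩ := key s hs
    have h1 : HasDerivAt (fun x => Real.log (z x)) (z' s / z s) s :=
      (hderiv s hs).log hz1.ne'
    have h2 : HasDerivAt (fun x => (1 : ℝ) - M₁ * z x) (-(M₁ * z' s)) s := by
      simpa using ((hderiv s hs).const_mul M₁).const_sub 1
    have h3 : HasDerivAt (fun x => Real.log (1 - M₁ * z x)) (-(M₁ * z' s) / (1 - M₁ * z s)) s :=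
      h2.log hz2.ne'
    have h4 : HasDerivAt (fun x => Real.log x / 2) (s⁻¹ / 2) s :=
      (Real.hasDerivAt_log hs0.ne').div_const 2
    have h5 := (h1.sub h3).add h4
    refine h5.congr_deriv ?_
    obtain ⟨q, hq⟩ : ∃ q, q = 1 - M₁ * z s := ⟨_, rfl⟩
    have hz2' : q ≠ 0 := hq ▸ hz2.ne'
    rw [← hq]
    field_simp
    rw [hq]
    ring
  have hFanti : AntitoneOn F (Set.Ici t₀) := by
    apply antitoneOn_of_deriv_nonpos (convex_Ici t₀)
    · exact fun s hs => ((hFderiv s hs).continuousAt).continuousWithinAt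
    · intro s hs
      rw [interior_Ici] at hs
      exact ((hFderiv s (Set.mem_Ioi.mp hs).le).differentiableAt).differentiableWithinAt
    · intro s hs
      rw [interior_Ici] at hs
      rw [(hFderiv s (Set.mem_Ioi.mp hs).le).deriv]
      exact hineq s hs.le
  intro t ht
  have ht0 : 0 < t := lt_of_lt_of_le ht₀ ht
  obtain ⟨hz1, hq1⟩ := key t ht
  obtain ⟨hz0, hq0⟩ := key t₀ le_rfl
  have hFle : F t ≤ F t₀ := hFanti Set.self_mem_Ici ht ht
  have hsq : Real.sqrt t ^ 2 = t := Real.sq_sqrt ht0.le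
  have hsq0 : Real.sqrt t₀ ^ 2 = t₀ := Real.sq_sqrt ht₀.le
  have hst : 0 < Real.sqrt t := Real.sqrt_pos.mpr ht0
  have hst0 : 0 < Real.sqrt t₀ := Real.sqrt_pos.mpr ht₀
  have hlogF : ∀ s, 0 < s → 0 < z s → 0 < 1 - M₁ * z s →
      F s = Real.log (Real.sqrt s * z s / (1 - M₁ * z s)) := by
    intro s hs hzs hqs
    rw [Real.log_div (by positivity) hqs.ne',
        Real.log_mul (Real.sqrt_pos.mpr hs).ne' hzs.ne', Real.log_sqrt hs.le]
    ring
  have hab : Real.sqrt t * z t / (1 - M₁ * z t) ≤ Real.sqrt t₀ * z t₀ / (1 - M₁ * z t₀) := by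
    rw [← Real.log_le_log_iff (by positivity) (by positivity),
        ← hlogF t ht0 hz1 hq1, ← hlogF t₀ ht₀ hz0 hq0]
    exact hFle
  have h1 : Real.sqrt t * z t * (1 - M₁ * z t₀) ≤ Real.sqrt t₀ * z t₀ * (1 - M₁ * z t) :=
    (div_le_div_iff₀ hq1 hq0).mp hab
  refine ⟨h1, ?_⟩
  have hAq : Real.sqrt t * z t * (1 - M₁ * z t₀) ≤ Real.sqrt t₀ * z t₀ := by
    have hq1' : 1 - M₁ * z t ≤ 1 := by nlinarith
    nlinarith [mul_pos hst0 hz0]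
  have h2 : (Real.sqrt t * z t * (1 - M₁ * z t₀)) ^ 2 ≤ (Real.sqrt t₀ * z t₀) ^ 2 :=
    pow_le_pow_left₀ (by positivity) hAq 2
  rw [le_div_iff₀ (by positivity)]
  rw [mul_pow, mul_pow, mul_pow, hsq, hsq0] at h2
  linarith
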